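/- arXiv:1808.05802 — 4 statements merged into one kernel-verified Lean document; each statement's English description precedes it below -/
import Mathlib

section
/- Let f ∈ ℝ^m with f ≥ 0 componentwise and ε > 0. Define G : ℂ^m → ℝ by G(z) = (1/2)·Σ_t (√(|z(t)|² + ε) − √(f(t) + ε))². Then the gradient of G (identifying ℂ^m with ℝ^{2m}) is Lipschitz continuous with Lipschitz constant at most 1 + (2/√ε)·max_t √(f(t) + ε); that is, ‖∇G(v₂) − ∇G(v₁)‖ ≤ (1 + (2/√ε)·‖√(f + ε·1)‖_∞)·‖v₂ − v₁‖ for all v₁, v₂ ∈ ℂ^m, where ∇G(z) = z − (√(f + ε·1)/√(|z|² + ε·1)) ∘ z with all operations elementwise. -/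
-- |√(x²+ε) - √(y²+ε)| ≤ |x - y|
lemma aux_sqrt_lip (ε : ℝ) (hε : 0 < ε) (x y : ℝ) :
    |Real.sqrt (x^2+ε) - Real.sqrt (y^2+ε)| ≤ |x - y| := by
  set a := Real.sqrt (x^2+ε) with ha'
  set b := Real.sqrt (y^2+ε) with hb'
  have ha2 : a^2 = x^2+ε := Real.sq_sqrt (by positivity)
  have hb2 : b^2 = y^2+ε := Real.sq_sqrt (by positivity)
  have hab : x*y + ε ≤ a*b := by
    rw [ha', hb', ← Real.sqrt_mul (by positivity)]
    have h2 : (x*y+ε)^2 ≤ (x^2+ε)*(y^2+ε) := by nlinarith [sq_nonneg (x-y)]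
    calc x*y+ε ≤ |x*y+ε| := le_abs_self _
      _ = Real.sqrt ((x*y+ε)^2) := (Real.sqrt_sq_eq_abs _).symm
      _ ≤ _ := Real.sqrt_le_sqrt h2
  have hsq : (a-b)^2 ≤ (x-y)^2 := by nlinarith
  calc |a-b| = Real.sqrt ((a-b)^2) := (Real.sqrt_sq_eq_abs _).symm
    _ ≤ Real.sqrt ((x-y)^2) := Real.sqrt_le_sqrt hsq
    _ = |x-y| := Real.sqrt_sq_eq_abs _

-- pointwise Lipschitz bound
lemma aux_pt (ε : ℝ) (hε : 0 < ε) (c : ℝ) (hc : 0 ≤ c) (w₁ w₂ : ℂ) :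
    ‖(w₂ - ((c / Real.sqrt (‖w₂‖ ^ 2 + ε) : ℝ) : ℂ) * w₂) -
      (w₁ - ((c / Real.sqrt (‖w₁‖ ^ 2 + ε) : ℝ) : ℂ) * w₁)‖ ≤
      (1 + (2 / Real.sqrt ε) * c) * ‖w₂ - w₁‖ := by
  set x := ‖w₁‖ with hx'
  set y := ‖w₂‖ with hy'
  have hx0 : 0 ≤ x := norm_nonneg _
  have hy0 : 0 ≤ y := norm_nonneg _
  set a := Real.sqrt (x^2+ε) with ha'
  set b := Real.sqrt (y^2+ε) with hb'
  have hse : 0 < Real.sqrt ε := Real.sqrt_pos.2 hε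
  have hsa : Real.sqrt ε ≤ a := Real.sqrt_le_sqrt (by nlinarith)
  have hsb : Real.sqrt ε ≤ b := Real.sqrt_le_sqrt (by nlinarith)
  have ha : 0 < a := lt_of_lt_of_le hse hsa
  have hb : 0 < b := lt_of_lt_of_le hse hsb
  have hxa : x ≤ a := by
    rw [ha']
    calc x = Real.sqrt (x^2) := (Real.sqrt_sq hx0).symm
      _ ≤ _ := Real.sqrt_le_sqrt (by linarith)
  have hab : |a - b| ≤ ‖w₂ - w₁‖ := by
    calc |a - b| ≤ |x - y| := aux_sqrt_lip ε hε x y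
      _ = |‖w₁‖ - ‖w₂‖| := rfl
      _ ≤ ‖w₁ - w₂‖ := abs_norm_sub_norm_le _ _
      _ = ‖w₂ - w₁‖ := norm_sub_rev _ _
  set d := ‖w₂ - w₁‖ with hd'
  have hd0 : 0 ≤ d := norm_nonneg _
  -- the quotient part
  have H : ‖((b:ℂ))⁻¹ * w₂ - ((a:ℂ))⁻¹ * w₁‖ ≤ (2 / Real.sqrt ε) * d := by
    have hsplit : ((b:ℂ))⁻¹ * w₂ - ((a:ℂ))⁻¹ * w₁
        = ((b:ℂ))⁻¹ * (w₂ - w₁) + (((b:ℂ))⁻¹ - ((a:ℂ))⁻¹) * w₁ := by ring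
    have h1 : ‖((b:ℂ))⁻¹ * (w₂ - w₁)‖ ≤ d / Real.sqrt ε := by
      rw [norm_mul, norm_inv, Complex.norm_real, Real.norm_eq_abs, abs_of_pos hb]
      rw [div_eq_inv_mul]
      gcongr
    have h2 : ‖(((b:ℂ))⁻¹ - ((a:ℂ))⁻¹) * w₁‖ ≤ d / Real.sqrt ε := by
      rw [norm_mul]
      have e1 : (((b:ℂ))⁻¹ - ((a:ℂ))⁻¹) = (((a - b)/(a*b) : ℝ) : ℂ) := by
        have hane : (a:ℂ) ≠ 0 := Complex.ofReal_ne_zero.2 ha.ne'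
        have hbne : (b:ℂ) ≠ 0 := Complex.ofReal_ne_zero.2 hb.ne'
        push_cast
        rw [inv_sub_inv hbne hane]
        ring
      rw [e1, Complex.norm_real, Real.norm_eq_abs, abs_div, abs_of_pos (by positivity : (0:ℝ) < a*b)]
      rw [← hx']
      rw [div_mul_eq_mul_div, div_le_div_iff₀ (by positivity) hse]
      calc |a - b| * x * Real.sqrt ε ≤ d * a * b := by gcongr
        _ = d * (a * b) := by ring
    calc ‖((b:ℂ))⁻¹ * w₂ - ((a:ℂ))⁻¹ * w₁‖
        ≤ ‖((b:ℂ))⁻¹ * (w₂ - w₁)‖ + ‖(((b:ℂ))⁻¹ - ((a:ℂ))⁻¹) * w₁‖ := by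
          rw [hsplit]; exact norm_add_le _ _
      _ ≤ d / Real.sqrt ε + d / Real.sqrt ε := add_le_add h1 h2
      _ = (2 / Real.sqrt ε) * d := by ring
  have hE : (w₂ - ((c / b : ℝ) : ℂ) * w₂) - (w₁ - ((c / a : ℝ) : ℂ) * w₁)
      = (w₂ - w₁) - (c:ℂ) * (((b:ℂ))⁻¹ * w₂ - ((a:ℂ))⁻¹ * w₁) := by
    push_cast
    field_simp
    ring
  rw [hE]
  calc ‖(w₂ - w₁) - (c:ℂ) * (((b:ℂ))⁻¹ * w₂ - ((a:ℂ))⁻¹ * w₁)‖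
      ≤ ‖w₂ - w₁‖ + ‖(c:ℂ) * (((b:ℂ))⁻¹ * w₂ - ((a:ℂ))⁻¹ * w₁)‖ := norm_sub_le _ _
    _ = d + c * ‖((b:ℂ))⁻¹ * w₂ - ((a:ℂ))⁻¹ * w₁‖ := by
        rw [norm_mul, Complex.norm_real, Real.norm_eq_abs, abs_of_nonneg hc]
    _ ≤ d + c * ((2 / Real.sqrt ε) * d) := by
        have := mul_le_mul_of_nonneg_left H hc
        linarith
    _ = (1 + (2 / Real.sqrt ε) * c) * d := by ring

/-- Lipschitz bound for the gradient of the penalized amplitude-Gaussian metric: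
with `∇G(z) = z − (√(f + ε·1)/√(|z|² + ε·1)) ∘ z` (elementwise), one has
`‖∇G(v₂) − ∇G(v₁)‖ ≤ (1 + (2/√ε)·‖√(f + ε·1)‖_∞)·‖v₂ − v₁‖`. -/
theorem stmt_3 (m : ℕ) (f : Fin m → ℝ) (hf : ∀ t, 0 ≤ f t) (ε : ℝ) (hε : 0 < ε)
    (gradG : EuclideanSpace ℂ (Fin m) → EuclideanSpace ℂ (Fin m))
    (hgrad : ∀ z t, gradG z t =
      z t - (Real.sqrt (f t + ε) / Real.sqrt (‖z t‖ ^ 2 + ε) : ℝ) * z t) :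
    ∀ v₁ v₂ : EuclideanSpace ℂ (Fin m),
      ‖gradG v₂ - gradG v₁‖ ≤
        (1 + (2 / Real.sqrt ε) * ⨆ t : Fin m, Real.sqrt (f t + ε)) * ‖v₂ - v₁‖ := by
  intro v₁ v₂
  set S := ⨆ t : Fin m, Real.sqrt (f t + ε) with hS'
  have hS0 : 0 ≤ S := Real.iSup_nonneg fun t => Real.sqrt_nonneg _
  set L := 1 + (2 / Real.sqrt ε) * S with hL'
  have hse : 0 < Real.sqrt ε := Real.sqrt_pos.2 hε
  have hL0 : 0 ≤ L := by positivity
  have hSle : ∀ t, Real.sqrt (f t + ε) ≤ S := fun t =>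
    le_ciSup (f := fun t => Real.sqrt (f t + ε)) (Set.Finite.bddAbove (Set.finite_range _)) t
  have key : ∀ t, ‖(gradG v₂ - gradG v₁) t‖ ≤ L * ‖(v₂ - v₁) t‖ := by
    intro t
    have h1 : (gradG v₂ - gradG v₁) t = gradG v₂ t - gradG v₁ t := rfl
    have h2 : (v₂ - v₁) t = v₂ t - v₁ t := rfl
    rw [h1, h2, hgrad, hgrad]
    calc ‖(v₂ t - ((Real.sqrt (f t + ε) / Real.sqrt (‖v₂ t‖ ^ 2 + ε) : ℝ) : ℂ) * v₂ t) -
          (v₁ t - ((Real.sqrt (f t + ε) / Real.sqrt (‖v₁ t‖ ^ 2 + ε) : ℝ) : ℂ) * v₁ t)‖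
        ≤ (1 + (2 / Real.sqrt ε) * Real.sqrt (f t + ε)) * ‖v₂ t - v₁ t‖ :=
          aux_pt ε hε _ (Real.sqrt_nonneg _) (v₁ t) (v₂ t)
      _ ≤ L * ‖v₂ t - v₁ t‖ := by
          apply mul_le_mul_of_nonneg_right _ (norm_nonneg _)
          rw [hL']
          have := hSle t
          gcongr
  rw [EuclideanSpace.norm_eq, EuclideanSpace.norm_eq]
  have hsum : ∑ t, ‖(gradG v₂ - gradG v₁) t‖ ^ 2 ≤ L ^ 2 * ∑ t, ‖(v₂ - v₁) t‖ ^ 2 := by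
    rw [Finset.mul_sum]
    apply Finset.sum_le_sum
    intro t _
    have := key t
    calc ‖(gradG v₂ - gradG v₁) t‖ ^ 2 ≤ (L * ‖(v₂ - v₁) t‖) ^ 2 := by
          apply pow_le_pow_left₀ (norm_nonneg _) this
      _ = L ^ 2 * ‖(v₂ - v₁) t‖ ^ 2 := by ring
  calc Real.sqrt (∑ t, ‖(gradG v₂ - gradG v₁) t‖ ^ 2)
      ≤ Real.sqrt (L ^ 2 * ∑ t, ‖(v₂ - v₁) t‖ ^ 2) := Real.sqrt_le_sqrt hsum
    _ = L * Real.sqrt (∑ t, ‖(v₂ - v₁) t‖ ^ 2) := by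
        rw [Real.sqrt_mul (sq_nonneg _), Real.sqrt_sq hL0]
end

section
/- Let f ∈ ℝ^m with f ≥ 0 componentwise and ε > 0. Define G : ℂ^m → ℝ by G(z) = (1/2)·Σ_t (|z(t)|² + ε − (f(t) + ε)·log(|z(t)|² + ε)). Then its gradient ∇G(z) = z − ((f + ε·1)/(|z|² + ε·1)) ∘ z is Lipschitz continuous with constant at most 1 + (2/ε)·max_t(f(t) + ε). -/
lemma hlip_aux (ε a : ℝ) (hε : 0 < ε) (ha : ε ≤ a) (w₁ w₂ : ℂ) :
    ‖((a / (‖w₂‖ ^ 2 + ε) : ℝ) : ℂ) * w₂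
        - ((a / (‖w₁‖ ^ 2 + ε) : ℝ) : ℂ) * w₁‖
      ≤ (2 * a / ε) * ‖w₂ - w₁‖ := by
  set r₁ := ‖w₁‖ with hr₁
  set r₂ := ‖w₂‖ with hr₂
  have hr₁0 : 0 ≤ r₁ := norm_nonneg _
  have hr₂0 : 0 ≤ r₂ := norm_nonneg _
  have hd₁ : 0 < r₁ ^ 2 + ε := by positivity
  have hd₂ : 0 < r₂ ^ 2 + ε := by positivity
  have hc₁ : ((r₁ ^ 2 + ε : ℝ) : ℂ) = w₁ * starRingEnd ℂ w₁ + (ε : ℂ) := by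
    rw [hr₁, Complex.sq_norm]
    push_cast
    rw [Complex.mul_conj]
  have hc₂ : ((r₂ ^ 2 + ε : ℝ) : ℂ) = w₂ * starRingEnd ℂ w₂ + (ε : ℂ) := by
    rw [hr₂, Complex.sq_norm]
    push_cast
    rw [Complex.mul_conj]
  have hd₁c : w₁ * starRingEnd ℂ w₁ + (ε : ℂ) ≠ 0 := by
    rw [← hc₁]; exact_mod_cast hd₁.ne'
  have hd₂c : w₂ * starRingEnd ℂ w₂ + (ε : ℂ) ≠ 0 := by
    rw [← hc₂]; exact_mod_cast hd₂.ne'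
  have e₁ : ((a / (r₁ ^ 2 + ε) : ℝ) : ℂ) = (a : ℂ) / (w₁ * starRingEnd ℂ w₁ + (ε : ℂ)) := by
    rw [← hc₁, Complex.ofReal_div]
  have e₂ : ((a / (r₂ ^ 2 + ε) : ℝ) : ℂ) = (a : ℂ) / (w₂ * starRingEnd ℂ w₂ + (ε : ℂ)) := by
    rw [← hc₂, Complex.ofReal_div]
  have key : ((a / (r₂ ^ 2 + ε) : ℝ) : ℂ) * w₂ - ((a / (r₁ ^ 2 + ε) : ℝ) : ℂ) * w₁
      = (a : ℂ) * (w₁ * w₂ * (starRingEnd ℂ (w₁ - w₂)) + (ε : ℂ) * (w₂ - w₁))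
        / (((r₁ ^ 2 + ε : ℝ) : ℂ) * ((r₂ ^ 2 + ε : ℝ) : ℂ)) := by
    rw [e₁, e₂, hc₁, hc₂, map_sub]
    field_simp
    ring
  rw [key, norm_div, norm_mul, norm_mul, Complex.norm_real, Real.norm_eq_abs, Complex.norm_real, Real.norm_eq_abs,
    Complex.norm_real, Real.norm_eq_abs]
  have habs : ‖w₁ * w₂ * (starRingEnd ℂ (w₁ - w₂)) + (ε : ℂ) * (w₂ - w₁)‖
      ≤ (r₁ * r₂ + ε) * ‖w₂ - w₁‖ := by
    calc ‖w₁ * w₂ * (starRingEnd ℂ (w₁ - w₂)) + (ε : ℂ) * (w₂ - w₁)‖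
        ≤ ‖w₁ * w₂ * (starRingEnd ℂ (w₁ - w₂))‖ + ‖(ε : ℂ) * (w₂ - w₁)‖ :=
          norm_add_le _ _
      _ = r₁ * r₂ * ‖w₂ - w₁‖ + ε * ‖w₂ - w₁‖ := by
          rw [norm_mul, norm_mul, norm_mul, Complex.norm_conj, Complex.norm_real, Real.norm_eq_abs,
            abs_of_pos hε, ← norm_neg (w₁ - w₂), neg_sub]
      _ = (r₁ * r₂ + ε) * ‖w₂ - w₁‖ := by ring
  have ha0 : 0 ≤ a := le_trans hε.le ha
  have hden : ε * (r₁ * r₂ + ε) ≤ 2 * ((r₁ ^ 2 + ε) * (r₂ ^ 2 + ε)) := by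
    nlinarith [sq_nonneg (r₁ - r₂), sq_nonneg (r₁ * r₂), mul_nonneg hr₁0 hr₂0]
  rw [abs_of_pos hd₁, abs_of_pos hd₂, abs_of_nonneg ha0, div_le_iff₀ (by positivity)]
  calc a * ‖w₁ * w₂ * (starRingEnd ℂ (w₁ - w₂)) + (ε : ℂ) * (w₂ - w₁)‖
      ≤ a * ((r₁ * r₂ + ε) * ‖w₂ - w₁‖) :=
        mul_le_mul_of_nonneg_left habs ha0
    _ ≤ 2 * a / ε * ‖w₂ - w₁‖ * ((r₁ ^ 2 + ε) * (r₂ ^ 2 + ε)) := by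
        rw [div_mul_eq_mul_div, div_mul_eq_mul_div, le_div_iff₀ hε]
        nlinarith [mul_le_mul_of_nonneg_left hden (mul_nonneg ha0 (norm_nonneg (w₂ - w₁)))]

/-- Lipschitz bound for the gradient of the penalized intensity-Poisson metric:
with `∇G(z) = z − ((f + ε·1)/(|z|² + ε·1)) ∘ z` (elementwise), one has
`‖∇G(v₂) − ∇G(v₁)‖ ≤ (1 + (2/ε)·max_t (f t + ε))·‖v₂ − v₁‖`. -/
theorem stmt_4 (m : ℕ) (f : Fin m → ℝ) (hf : ∀ t, 0 ≤ f t) (ε : ℝ) (hε : 0 < ε)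
    (gradG : EuclideanSpace ℂ (Fin m) → EuclideanSpace ℂ (Fin m))
    (hgrad : ∀ z t, gradG z t =
      z t - ((f t + ε) / (‖z t‖ ^ 2 + ε) : ℝ) * z t) :
    ∀ v₁ v₂ : EuclideanSpace ℂ (Fin m),
      ‖gradG v₂ - gradG v₁‖ ≤
        (1 + (2 / ε) * ⨆ t : Fin m, (f t + ε)) * ‖v₂ - v₁‖ := by
  intro v₁ v₂
  set S := ⨆ t : Fin m, (f t + ε) with hS
  set L := 1 + (2 / ε) * S with hL
  have hS0 : 0 ≤ S := by
    rcases Nat.eq_zero_or_pos m with hm | hm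
    · subst hm
      simp [hS, Real.iSup_of_isEmpty]
    · have h1 : f ⟨0, hm⟩ + ε ≤ S := by
        rw [hS]
        exact le_ciSup (Set.Finite.bddAbove (Set.finite_range fun t => f t + ε)) ⟨0, hm⟩
      linarith [hf ⟨0, hm⟩]
  have hL0 : 0 ≤ L := by
    rw [hL]
    positivity
  have hpt : ∀ t, ‖(gradG v₂ - gradG v₁) t‖ ≤ L * ‖(v₂ - v₁) t‖ := by
    intro t
    have hSt : f t + ε ≤ S := by
      rw [hS]
      exact le_ciSup (Set.Finite.bddAbove (Set.finite_range fun t => f t + ε)) t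
    have hdv : (v₂ - v₁) t = v₂ t - v₁ t := rfl
    have h1 : (gradG v₂ - gradG v₁) t =
        (v₂ t - v₁ t)
          - (((f t + ε) / (‖v₂ t‖ ^ 2 + ε) : ℝ) * v₂ t
            - ((f t + ε) / (‖v₁ t‖ ^ 2 + ε) : ℝ) * v₁ t) := by
      have : (gradG v₂ - gradG v₁) t = gradG v₂ t - gradG v₁ t := rfl
      rw [this, hgrad, hgrad]
      ring
    have hkey : ‖((f t + ε) / (‖v₂ t‖ ^ 2 + ε) : ℝ) * (v₂ t : ℂ)
        - ((f t + ε) / (‖v₁ t‖ ^ 2 + ε) : ℝ) * v₁ t‖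
        ≤ (2 * (f t + ε) / ε) * ‖v₂ t - v₁ t‖ := by
      simpa using
        hlip_aux ε (f t + ε) hε (by linarith [hf t]) (v₁ t) (v₂ t)
    have hmono : (2 * (f t + ε) / ε) * ‖v₂ t - v₁ t‖ ≤ (2 / ε * S) * ‖v₂ t - v₁ t‖ := by
      apply mul_le_mul_of_nonneg_right _ (norm_nonneg _)
      calc 2 * (f t + ε) / ε ≤ 2 * S / ε := by gcongr <;> linarith
          _ = 2 / ε * S := by ring
    rw [h1, hdv]
    calc ‖(v₂ t - v₁ t)
          - (((f t + ε) / (‖v₂ t‖ ^ 2 + ε) : ℝ) * v₂ t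
            - ((f t + ε) / (‖v₁ t‖ ^ 2 + ε) : ℝ) * v₁ t)‖
        ≤ ‖v₂ t - v₁ t‖ + ‖((f t + ε) / (‖v₂ t‖ ^ 2 + ε) : ℝ) * v₂ t
            - ((f t + ε) / (‖v₁ t‖ ^ 2 + ε) : ℝ) * v₁ t‖ := norm_sub_le _ _
      _ ≤ ‖v₂ t - v₁ t‖ + (2 / ε * S) * ‖v₂ t - v₁ t‖ := by
          linarith [hkey, hmono]
      _ = L * ‖v₂ t - v₁ t‖ := by rw [hL]; ring
  rw [EuclideanSpace.norm_eq, EuclideanSpace.norm_eq,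
    ← Real.sqrt_sq hL0, ← Real.sqrt_mul (sq_nonneg L)]
  apply Real.sqrt_le_sqrt
  rw [Finset.mul_sum]
  apply Finset.sum_le_sum
  intro t _
  calc ‖(gradG v₂ - gradG v₁) t‖ ^ 2 ≤ (L * ‖(v₂ - v₁) t‖) ^ 2 :=
        pow_le_pow_left₀ (norm_nonneg _) (hpt t) 2
    _ = L ^ 2 * ‖(v₂ - v₁) t‖ ^ 2 := by ring
end

section
/- Fix β > 0, ε > 0, f ≥ 0 and z⁺ ∈ ℂ. Any minimizer z* ∈ ℂ of the scalar function z ↦ (1/2)(|z|² + ε − (f + ε)·log(|z|² + ε)) + (β/2)|z − z⁺|² can be written as z* = ρ*·sign(z⁺), where ρ* ≥ 0 minimizes x ↦ (1/2)x² − (1/2)(f + ε)·log(x² + ε) + (β/2)(x − |z⁺|)² over x ≥ 0. In particular the minimization over ℂ reduces to a one-dimensional real minimization over modulus. -/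
/-- The complex scalar proximal problem for the penalized Poisson metric reduces to a
one-dimensional real minimization over the modulus: any minimizer `z*` of
`z ↦ (1/2)(|z|² + ε − (f+ε)·log(|z|² + ε)) + (β/2)|z − z⁺|²` can be written as
`z* = ρ*·sign(z⁺)` with `ρ* ≥ 0` minimizing the corresponding real function. -/
theorem stmt_11 (β ε f : ℝ) (hβ : 0 < β) (hε : 0 < ε) (hf : 0 ≤ f) (zp : ℂ)
    (F : ℂ → ℝ)
    (hF : ∀ z, F z = (1 / 2) * (‖z‖ ^ 2 + ε
        - (f + ε) * Real.log (‖z‖ ^ 2 + ε))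
      + (β / 2) * ‖z - zp‖ ^ 2)
    (zstar : ℂ) (hmin : ∀ z, F zstar ≤ F z) :
    ∃ (s : ℂ) (ρ : ℝ), ‖s‖ = 1 ∧
      (zp ≠ 0 → s = zp / (‖zp‖ : ℂ)) ∧ 0 ≤ ρ ∧ zstar = (ρ : ℂ) * s ∧
      ∀ x : ℝ, 0 ≤ x →
        (1 / 2) * ρ ^ 2 - (1 / 2) * (f + ε) * Real.log (ρ ^ 2 + ε)
          + (β / 2) * (ρ - ‖zp‖) ^ 2 ≤
        (1 / 2) * x ^ 2 - (1 / 2) * (f + ε) * Real.log (x ^ 2 + ε)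
          + (β / 2) * (x - ‖zp‖) ^ 2 := by
  have hr : (0:ℝ) ≤ ‖zstar‖ := norm_nonneg _
  have ha : (0:ℝ) ≤ ‖zp‖ := norm_nonneg _
  -- obtain unit s with zstar = |zstar|*s, zp = |zp|*s
  obtain ⟨s, hs1, hsgn, hzs, hzps⟩ :
      ∃ s : ℂ, ‖s‖ = 1 ∧ (zp ≠ 0 → s = zp / (‖zp‖ : ℂ)) ∧
        zstar = ((‖zstar‖ : ℝ) : ℂ) * s ∧
        zp = ((‖zp‖ : ℝ) : ℂ) * s := by
    by_cases hzp : zp = 0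
    · by_cases hz : zstar = 0
      · exact ⟨1, by simp, fun h => absurd hzp h, by simp [hz], by simp [hzp]⟩
      · have hrne : ‖zstar‖ ≠ 0 := norm_ne_zero_iff.mpr hz
        have hrC : ((‖zstar‖ : ℝ) : ℂ) ≠ 0 := by exact_mod_cast hrne
        refine ⟨zstar / ((‖zstar‖ : ℝ) : ℂ), ?_, fun h => absurd hzp h, ?_, ?_⟩
        · rw [norm_div, Complex.norm_real, Real.norm_eq_abs, abs_of_nonneg hr, div_self hrne]
        · rw [mul_comm, div_mul_cancel₀ _ hrC]
        · simp [hzp]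
    · have ha' : ‖zp‖ ≠ 0 := norm_ne_zero_iff.mpr hzp
      have haC : ((‖zp‖ : ℝ) : ℂ) ≠ 0 := by exact_mod_cast ha'
      refine ⟨zp / ((‖zp‖ : ℝ) : ℂ), ?_, fun _ => rfl, ?_,
        by rw [mul_comm, div_mul_cancel₀ _ haC]⟩
      · rw [norm_div, Complex.norm_real, Real.norm_eq_abs, abs_of_nonneg ha, div_self ha']
      · -- the equality argument: zstar must be aligned with zp
        obtain ⟨r, hrd⟩ : ∃ r : ℝ, r = ‖zstar‖ := ⟨_, rfl⟩
        obtain ⟨a, had⟩ : ∃ a : ℝ, a = ‖zp‖ := ⟨_, rfl⟩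
        rw [← had] at ha' haC
        have hr' : 0 ≤ r := hrd ▸ hr
        have ha'' : 0 ≤ a := had ▸ ha
        have key := hmin ((r : ℂ) * (zp / (a : ℂ)))
        rw [hF, hF] at key
        have habsrs : ‖(r : ℂ) * (zp / (a : ℂ))‖ = r := by
          rw [norm_mul, Complex.norm_real, Real.norm_eq_abs, abs_of_nonneg hr', norm_div,
            Complex.norm_real, Real.norm_eq_abs, abs_of_nonneg ha'', ← had, div_self ha', mul_one]
        have habsd : ‖(r : ℂ) * (zp / (a : ℂ)) - zp‖ ^ 2 = (r - a) ^ 2 := by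
          have h : (r : ℂ) * (zp / (a : ℂ)) - zp = ((r - a : ℝ) : ℂ) * (zp / (a : ℂ)) := by
            push_cast; field_simp
          rw [h, norm_mul, Complex.norm_real, Real.norm_eq_abs, norm_div, Complex.norm_real, Real.norm_eq_abs,
            abs_of_nonneg ha'', ← had, div_self ha', mul_one, sq_abs]
        rw [habsrs, ← hrd] at key
        -- so abs (zstar - zp)^2 ≤ (r - a)^2
        have h1 : ‖zstar - zp‖ ^ 2 ≤ (r - a) ^ 2 := by
          nlinarith [key, habsd]
        have h2 : (r - a) ^ 2 ≤ ‖zstar - zp‖ ^ 2 := by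
          have hlb : |r - a| ≤ ‖zstar - zp‖ := by
            simpa [hrd, had] using abs_norm_sub_norm_le zstar zp
          nlinarith [norm_nonneg (zstar - zp), abs_nonneg (r - a), sq_abs (r - a)]
        have heq : ‖zstar - zp‖ ^ 2 = (r - a) ^ 2 := le_antisymm h1 h2
        -- expand: re (zstar * conj zp) = r * a
        have e1 : ‖zstar - zp‖ ^ 2 = Complex.normSq (zstar - zp) :=
          Complex.sq_norm _
        have e2 : Complex.normSq (zstar - zp)
            = Complex.normSq zstar + Complex.normSq zp
              - 2 * (zstar * (starRingEnd ℂ) zp).re := Complex.normSq_sub _ _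
        have e3 : Complex.normSq zstar = r ^ 2 := by rw [hrd]; exact (Complex.sq_norm _).symm
        have e4 : Complex.normSq zp = a ^ 2 := by rw [had]; exact (Complex.sq_norm _).symm
        have hcomb : r ^ 2 + a ^ 2 - 2 * (zstar * (starRingEnd ℂ) zp).re
            = (r - a) ^ 2 := by rw [← e3, ← e4, ← e2, ← e1, heq]
        have hre : (zstar * (starRingEnd ℂ) zp).re = r * a := by nlinarith [hcomb]
        have habsu : ‖zstar * (starRingEnd ℂ) zp‖ = r * a := by
          rw [norm_mul, Complex.norm_conj, ← hrd, ← had]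
          -- done
        have him : (zstar * (starRingEnd ℂ) zp).im = 0 := by
          have hh := Complex.sq_norm (zstar * (starRingEnd ℂ) zp)
          rw [habsu, Complex.normSq_apply, hre] at hh
          have h2 : (zstar * (starRingEnd ℂ) zp).im ^ 2 = 0 := by linear_combination -hh
          exact pow_eq_zero_iff two_ne_zero |>.mp h2
        have hu : zstar * (starRingEnd ℂ) zp = ((r * a : ℝ) : ℂ) := by
          apply Complex.ext <;> simp [hre, him]
        have hzz : (starRingEnd ℂ) zp * zp = ((a ^ 2 : ℝ) : ℂ) := by
          rw [mul_comm, Complex.mul_conj, had]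
          norm_cast
          exact (Complex.sq_norm _).symm ▸ rfl
        have hmain : zstar * ((a : ℂ)) ^ 2 = (r : ℂ) * (a : ℂ) * zp := by
          have h5 : zstar * ((a ^ 2 : ℝ) : ℂ) = ((r * a : ℝ) : ℂ) * zp := by
            calc zstar * ((a ^ 2 : ℝ) : ℂ) = zstar * ((starRingEnd ℂ) zp * zp) := by
                  rw [hzz]
              _ = (zstar * (starRingEnd ℂ) zp) * zp := by ring
              _ = ((r * a : ℝ) : ℂ) * zp := by rw [hu]
          push_cast at h5
          linear_combination h5
        rw [← hrd, ← had, ← mul_div_assoc, eq_div_iff haC]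
        apply mul_left_cancel₀ haC
        linear_combination hmain
  refine ⟨s, ‖zstar‖, hs1, hsgn, hr, hzs, ?_⟩
  intro x hx
  have key := hmin ((x : ℂ) * s)
  rw [hF, hF] at key
  have e1 : ‖(x : ℂ) * s‖ = x := by
    rw [norm_mul, hs1, mul_one, Complex.norm_real, Real.norm_eq_abs, abs_of_nonneg hx]
  have e2 : ‖(x : ℂ) * s - zp‖ ^ 2 = (x - ‖zp‖) ^ 2 := by
    have h : (x : ℂ) * s - zp = ((x - ‖zp‖ : ℝ) : ℂ) * s := by
      push_cast; rw [sub_mul]; congr 1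
    rw [h, norm_mul, hs1, Complex.norm_real, Real.norm_eq_abs, mul_one, sq_abs]
  have e3 : ‖zstar - zp‖ ^ 2 = (‖zstar‖ - ‖zp‖) ^ 2 := by
    have h : zstar - zp = ((‖zstar‖ - ‖zp‖ : ℝ) : ℂ) * s := by
      push_cast; rw [sub_mul]; congr 1
    rw [h, norm_mul, hs1, Complex.norm_real, Real.norm_eq_abs, mul_one, sq_abs]
  rw [e1, e2, e3] at key
  linarith
end

section
/- (Sufficient decrease in the z-update) Let G : ℂ^m → ℝ be C¹ with its gradient L-Lipschitz and satisfying the descent inequality G(v₂) − G(v₁) − Re⟨∇G(v₁), v₂ − v₁⟩ ≤ (L/2)‖v₂ − v₁‖². Fix w, Λ ∈ ℂ^m and β > 0, and define Υ(z) := G(z) + Re⟨z − w, Λ⟩ + (β/2)‖z − w‖². If z⁺ minimizes Υ over ℂ^m (so 0 = ∇G(z⁺) + β(z⁺ − w) + Λ), then for every z ∈ ℂ^m, Υ(z) − Υ(z⁺) ≥ ((β − 3L)/2)·‖z − z⁺‖². -/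
set_option maxHeartbeats 1000000 in
/-- Sufficient decrease in the `z`-update: if `∇G` is `L`-Lipschitz, `G` satisfies the
descent inequality, and `z⁺` minimizes `Υ(z) = G(z) + ⟨z − w, Λ⟩ + (β/2)‖z − w‖²`,
then `Υ(z) − Υ(z⁺) ≥ ((β − 3L)/2)·‖z − z⁺‖²` for every `z`.
(ℂ^m is identified with ℝ^{2m}; `Re⟨·,·⟩` becomes the real inner product.) -/
theorem stmt_13 (m : ℕ) (G : EuclideanSpace ℝ (Fin (2 * m)) → ℝ) (L β : ℝ)
    (hL : 0 < L) (hβ : 0 < β) (hC1 : ContDiff ℝ 1 G)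
    (hLip : ∀ v₁ v₂, ‖gradient G v₁ - gradient G v₂‖ ≤ L * ‖v₁ - v₂‖)
    (hdesc : ∀ v₁ v₂, G v₂ - G v₁ - (inner ℝ (gradient G v₁) (v₂ - v₁) : ℝ) ≤
      (L / 2) * ‖v₂ - v₁‖ ^ 2)
    (w Λ : EuclideanSpace ℝ (Fin (2 * m)))
    (Υ : EuclideanSpace ℝ (Fin (2 * m)) → ℝ)
    (hΥ : ∀ z, Υ z = G z + (inner ℝ (z - w) Λ : ℝ) + (β / 2) * ‖z - w‖ ^ 2)
    (zp : EuclideanSpace ℝ (Fin (2 * m))) (hmin : ∀ z, Υ zp ≤ Υ z) :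
    ∀ z, Υ z - Υ zp ≥ ((β - 3 * L) / 2) * ‖z - zp‖ ^ 2 := by
  intro z
  set d : EuclideanSpace ℝ (Fin (2 * m)) := z - zp with hd
  set g : EuclideanSpace ℝ (Fin (2 * m)) := gradient G zp with hg
  set N : ℝ := ‖d‖ ^ 2 with hN
  -- Step 1: ⟪g, d⟫ ≤ G z - G zp + (3L/2) N
  have hA : (inner ℝ g d : ℝ) ≤ G z - G zp + (3 * L / 2) * N := by
    have h1 := hdesc z zp
    have h2 : (inner ℝ (gradient G z - g) (zp - z) : ℝ) ≤ L * N := by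
      calc (inner ℝ (gradient G z - g) (zp - z) : ℝ)
          ≤ ‖gradient G z - g‖ * ‖zp - z‖ := real_inner_le_norm _ _
        _ ≤ (L * ‖z - zp‖) * ‖zp - z‖ :=
            mul_le_mul_of_nonneg_right (hLip z zp) (norm_nonneg _)
        _ = L * N := by rw [norm_sub_rev zp z, hN, hd]; ring
    have h3 : (inner ℝ (gradient G z - g) (zp - z) : ℝ)
        = inner ℝ (gradient G z) (zp - z) - inner ℝ g (zp - z) := inner_sub_left _ _ _
    have h4 : (inner ℝ g (zp - z) : ℝ) = - inner ℝ g d := by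
      have : zp - z = -d := by rw [hd]; abel
      rw [this, inner_neg_right]
    have h5 : ‖zp - z‖ ^ 2 = N := by rw [norm_sub_rev zp z, hN, hd]
    rw [h5] at h1
    linarith
  -- Step 2: for each small t, a bound
  have key : ∀ t : ℝ, 0 < t → t ≤ 1 →
      ((β - 3 * L) / 2) * N ≤ Υ z - Υ zp + ((β + L) / 2) * N * t := by
    intro t ht ht1
    set c : EuclideanSpace ℝ (Fin (2 * m)) := zp + t • d with hc
    have hczp : c - zp = t • d := by rw [hc]; abel
    have h1 := hmin c
    have h2 := hdesc zp c
    rw [hczp] at h2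
    have hsm : ‖t • d‖ ^ 2 = t ^ 2 * N := by
      rw [norm_smul, hN]; simp [abs_of_pos ht]; ring
    rw [hsm] at h2
    have hinsm : (inner ℝ g (t • d) : ℝ) = t * inner ℝ g d := real_inner_smul_right _ _ _
    rw [hinsm] at h2
    -- expansions of Υ c and Υ z
    have hcw : c - w = (zp - w) + t • d := by rw [hc]; abel
    have hzw : z - w = (zp - w) + d := by rw [hd]; abel
    have expand : ∀ (s : ℝ), ‖(zp - w) + s • d‖ ^ 2
        = ‖zp - w‖ ^ 2 + 2 * (s * inner ℝ (zp - w) d) + s ^ 2 * N := by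
      intro s
      rw [norm_add_sq_real, real_inner_smul_right, norm_smul, hN]
      rw [mul_pow]
      simp [sq_abs]
    have hUc : Υ c = G c + ((inner ℝ (zp - w) Λ : ℝ) + t * inner ℝ d Λ)
        + (β / 2) * (‖zp - w‖ ^ 2 + 2 * (t * inner ℝ (zp - w) d) + t ^ 2 * N) := by
      rw [hΥ, hcw, inner_add_left, real_inner_smul_left, expand]
    have hUz : Υ z = G z + ((inner ℝ (zp - w) Λ : ℝ) + inner ℝ d Λ)
        + (β / 2) * (‖zp - w‖ ^ 2 + 2 * (1 * inner ℝ (zp - w) d) + 1 ^ 2 * N) := by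
      rw [hΥ, hzw, inner_add_left]
      have := expand 1
      rw [one_smul] at this
      rw [this]
    have hUzp : Υ zp = G zp + (inner ℝ (zp - w) Λ : ℝ) + (β / 2) * ‖zp - w‖ ^ 2 := hΥ zp
    rw [hUc, hUzp] at h1
    have h3t : t * (inner ℝ g d : ℝ) ≤ t * (G z - G zp + (3 * L / 2) * N) :=
      mul_le_mul_of_nonneg_left hA ht.le
    -- combine: 0 ≤ t * X
    have hT : 0 ≤ t * ((G z - G zp) + (inner ℝ d Λ : ℝ) + β * inner ℝ (zp - w) d
        + (3 * L / 2) * N + ((β + L) / 2) * t * N) := by nlinarith [h1, h2, h3t]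
    have hX : 0 ≤ (G z - G zp) + (inner ℝ d Λ : ℝ) + β * inner ℝ (zp - w) d
        + (3 * L / 2) * N + ((β + L) / 2) * t * N := nonneg_of_mul_nonneg_left (by rw [mul_comm] at hT; exact hT) ht
    rw [hUz, hUzp]
    linarith [hX]
  -- Step 3: let t → 0⁺
  have hlim : Filter.Tendsto (fun t : ℝ => Υ z - Υ zp + ((β + L) / 2) * N * t)
      (nhdsWithin 0 (Set.Ioi 0)) (nhds (Υ z - Υ zp)) := by
    have hcont : Continuous (fun t : ℝ => Υ z - Υ zp + ((β + L) / 2) * N * t) :=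
      continuous_const.add (continuous_const.mul continuous_id)
    have := (hcont.tendsto 0).mono_left
      (nhdsWithin_le_nhds : nhdsWithin (0:ℝ) (Set.Ioi 0) ≤ nhds 0)
    simpa using this
  have hev : ∀ᶠ t in nhdsWithin (0:ℝ) (Set.Ioi 0),
      ((β - 3 * L) / 2) * N ≤ Υ z - Υ zp + ((β + L) / 2) * N * t := by
    filter_upwards [Ioc_mem_nhdsGT_of_mem (by norm_num : (0:ℝ) ∈ Set.Ico 0 1)] with t ht
    exact key t ht.1 ht.2
  exact ge_of_tendsto hlim hev
end
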